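/- arXiv:2008.05740 — 2 statements merged into one kernel-verified Lean document; each statement's English description precedes it below -/
import Mathlib

section
/- Fix real constants C > 0 and q > 2, and let f : ℝ → ℝ be defined by f(x) = x − (C+1)|x|^{q−2}·x for |x| ≤ 1 and f(x) = x·log|x| − C·x for |x| > 1, with F(x) = ∫₀^x f(s) ds. Then (f(x)·x − 2F(x))/x² → 1/2 as x → +∞ and also as x → −∞. In particular, liminf_{x→±∞} (f(x)·x − 2F(x))/|x|^τ ≥ 1/2 > 0 holds with τ = 2, so the paper's quasi-monotonicity condition H1(iii) is satisfied with τ = 2. -/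
open Filter MeasureTheory

/-- Antiderivative helper. -/
noncomputable def Gaux (C x : ℝ) : ℝ := x ^ 2 / 2 * Real.log x - x ^ 2 / 4 - C * x ^ 2 / 2

lemma Gaux_deriv (C : ℝ) {t : ℝ} (ht : t ≠ 0) :
    HasDerivAt (Gaux C) (t * Real.log t - C * t) t := by
  have h1 : HasDerivAt (fun x : ℝ => x ^ 2 / 2 * Real.log x)
      ((2 : ℕ) * t ^ 1 / 2 * Real.log t + t ^ 2 / 2 * t⁻¹) t :=
    ((hasDerivAt_pow 2 t).div_const 2).mul (Real.hasDerivAt_log ht)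
  have h2 : HasDerivAt (fun x : ℝ => x ^ 2 / 4) ((2 : ℕ) * t ^ 1 / 4) t :=
    (hasDerivAt_pow 2 t).div_const 4
  have h3 : HasDerivAt (fun x : ℝ => C * x ^ 2 / 2) (C * ((2 : ℕ) * t ^ 1) / 2) t :=
    ((hasDerivAt_pow 2 t).const_mul C).div_const 2
  have h := (h1.sub h2).sub h3
  refine h.congr_deriv ?_
  push_cast
  linear_combination (t/2) * (mul_inv_cancel₀ ht)

/-- For the model nonlinearity of the paper (`C > 0`, `q > 2`),
`(f(x)x - 2F(x))/x² → 1/2` as `x → ±∞`; in particular the liminf of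
`(f(x)x - 2F(x))/|x|^τ` at `±∞` with `τ = 2` is at least `1/2 > 0`,
so hypothesis H1(iii) holds with `τ = 2`. -/
theorem stmt_1 (C q : ℝ) (hC : 0 < C) (hq : 2 < q)
    (f F : ℝ → ℝ)
    (hf1 : ∀ x : ℝ, |x| ≤ 1 → f x = x - (C + 1) * |x| ^ (q - 2) * x)
    (hf2 : ∀ x : ℝ, 1 < |x| → f x = x * Real.log |x| - C * x)
    (hF : ∀ x : ℝ, F x = ∫ s in (0:ℝ)..x, f s) :
    Tendsto (fun x : ℝ => (f x * x - 2 * F x) / x ^ 2) atTop (nhds (1 / 2)) ∧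
    Tendsto (fun x : ℝ => (f x * x - 2 * F x) / x ^ 2) atBot (nhds (1 / 2)) ∧
    (1 / 2 : ℝ) ≤ liminf (fun x : ℝ => (f x * x - 2 * F x) / |x| ^ (2 : ℝ)) atTop ∧
    (1 / 2 : ℝ) ≤ liminf (fun x : ℝ => (f x * x - 2 * F x) / |x| ^ (2 : ℝ)) atBot ∧
    (0 : ℝ) < 1 / 2 := by
  have hq2 : (0:ℝ) ≤ q - 2 := by linarith
  -- f agrees with g(s) = s log s - C s whenever |s| ≥ 1
  have hfg : ∀ s : ℝ, 1 ≤ |s| → f s = s * Real.log s - C * s := by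
    intro s hs
    rcases eq_or_lt_of_le hs with h | h
    · rw [hf1 s h.ge, ← h, Real.one_rpow, ← Real.log_abs, ← h, Real.log_one]
      ring
    · rw [hf2 s h, Real.log_abs]
  -- continuity of g away from 0
  have hgc : ContinuousOn (fun s : ℝ => s * Real.log s - C * s) {(0:ℝ)}ᶜ :=
    (continuousOn_id.mul Real.continuousOn_log).sub
      ((continuous_const.mul continuous_id).continuousOn)
  -- continuity of the inner formula
  have habs : Continuous fun s : ℝ => |s| ^ (q - 2) :=
    continuous_abs.rpow_const (fun x => Or.inr hq2)
  have hhc : Continuous fun s : ℝ => s - (C + 1) * |s| ^ (q - 2) * s :=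
    continuous_id.sub ((continuous_const.mul habs).mul continuous_id)
  -- interval integrability of f on [0,1] and [-1,0]
  have hI01 : IntervalIntegrable f volume 0 1 := by
    refine (hhc.continuousOn.congr ?_).intervalIntegrable
    intro s hs
    rw [Set.uIcc_of_le (by norm_num : (0:ℝ) ≤ 1)] at hs
    exact hf1 s (abs_le.mpr ⟨by linarith [hs.1], hs.2⟩)
  have hI0m : IntervalIntegrable f volume 0 (-1) := by
    refine (hhc.continuousOn.congr ?_).intervalIntegrable
    intro s hs
    rw [Set.uIcc_of_ge (by norm_num : (-1:ℝ) ≤ 0)] at hs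
    exact hf1 s (abs_le.mpr ⟨hs.1, by linarith [hs.2]⟩)
  -- F on [1, ∞)
  have hFp : ∀ x : ℝ, 1 ≤ x → F x = F 1 + (Gaux C x - Gaux C 1) := by
    intro x hx
    have hsub : Set.uIcc 1 x ⊆ {(0:ℝ)}ᶜ := by
      intro s hs
      rw [Set.uIcc_of_le hx] at hs
      have : (1:ℝ) ≤ s := hs.1
      simp only [Set.mem_compl_iff, Set.mem_singleton_iff]
      linarith
    have hEq : Set.EqOn f (fun s : ℝ => s * Real.log s - C * s) (Set.uIcc 1 x) := by
      intro s hs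
      rw [Set.uIcc_of_le hx] at hs
      exact hfg s (le_trans hs.1 (le_abs_self s))
    have hI1x : IntervalIntegrable f volume 1 x :=
      ((hgc.mono hsub).congr hEq).intervalIntegrable
    have hsplit := intervalIntegral.integral_add_adjacent_intervals hI01 hI1x
    have hval : (∫ s in (1:ℝ)..x, f s) = Gaux C x - Gaux C 1 := by
      rw [intervalIntegral.integral_congr hEq]
      exact intervalIntegral.integral_eq_sub_of_hasDerivAt
        (fun t ht => Gaux_deriv C (hsub ht)) ((hgc.mono hsub).intervalIntegrable)
    rw [hF x, hF 1, ← hsplit, hval]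
  -- F on (-∞, -1]
  have hFm : ∀ x : ℝ, x ≤ -1 → F x = F (-1) + (Gaux C x - Gaux C (-1)) := by
    intro x hx
    have hsub : Set.uIcc (-1) x ⊆ {(0:ℝ)}ᶜ := by
      intro s hs
      rw [Set.uIcc_of_ge hx] at hs
      have : s ≤ -1 := hs.2
      simp only [Set.mem_compl_iff, Set.mem_singleton_iff]
      linarith
    have hEq : Set.EqOn f (fun s : ℝ => s * Real.log s - C * s) (Set.uIcc (-1) x) := by
      intro s hs
      rw [Set.uIcc_of_ge hx] at hs
      exact hfg s (le_trans (by linarith [hs.2]) (neg_le_abs s))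
    have hImx : IntervalIntegrable f volume (-1) x :=
      ((hgc.mono hsub).congr hEq).intervalIntegrable
    have hsplit := intervalIntegral.integral_add_adjacent_intervals hI0m hImx
    have hval : (∫ s in (-1:ℝ)..x, f s) = Gaux C x - Gaux C (-1) := by
      rw [intervalIntegral.integral_congr hEq]
      exact intervalIntegral.integral_eq_sub_of_hasDerivAt
        (fun t ht => Gaux_deriv C (hsub ht)) ((hgc.mono hsub).intervalIntegrable)
    rw [hF x, hF (-1), ← hsplit, hval]
  -- eventual formula at +∞
  have hEvP : ∀ᶠ x in atTop, (f x * x - 2 * F x) / x ^ 2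
      = 1 / 2 + (2 * (Gaux C 1 - F 1)) / x ^ 2 := by
    filter_upwards [eventually_ge_atTop (1:ℝ)] with x hx
    have hx0 : x ≠ 0 := by linarith
    rw [hfg x (le_trans hx (le_abs_self x)), hFp x hx]
    unfold Gaux
    field_simp
    ring
  have hEvM : ∀ᶠ x in atBot, (f x * x - 2 * F x) / x ^ 2
      = 1 / 2 + (2 * (Gaux C (-1) - F (-1))) / x ^ 2 := by
    filter_upwards [eventually_le_atBot (-1:ℝ)] with x hx
    have hx0 : x ≠ 0 := by linarith
    rw [hfg x (le_trans (by linarith) (neg_le_abs x)), hFm x hx]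
    unfold Gaux
    field_simp
    ring
  have hsqTop : Tendsto (fun x : ℝ => x ^ 2) atTop atTop :=
    tendsto_pow_atTop (by norm_num)
  have hsqBot : Tendsto (fun x : ℝ => x ^ 2) atBot atTop := by
    have := hsqTop.comp tendsto_neg_atBot_atTop
    simpa [Function.comp_def, neg_sq] using this
  have hTP : Tendsto (fun x : ℝ => (f x * x - 2 * F x) / x ^ 2) atTop (nhds (1/2)) := by
    have h0 : Tendsto (fun x : ℝ => (2 * (Gaux C 1 - F 1)) / x ^ 2) atTop (nhds 0) :=
      Tendsto.div_atTop tendsto_const_nhds hsqTop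
    have h1 : Tendsto (fun _ : ℝ => (1/2:ℝ)) atTop (nhds (1/2)) := tendsto_const_nhds
    simpa using (h1.add h0).congr' (Filter.EventuallyEq.symm hEvP)
  have hTM : Tendsto (fun x : ℝ => (f x * x - 2 * F x) / x ^ 2) atBot (nhds (1/2)) := by
    have h0 : Tendsto (fun x : ℝ => (2 * (Gaux C (-1) - F (-1))) / x ^ 2) atBot (nhds 0) :=
      Tendsto.div_atTop tendsto_const_nhds hsqBot
    have h1 : Tendsto (fun _ : ℝ => (1/2:ℝ)) atBot (nhds (1/2)) := tendsto_const_nhds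
    simpa using (h1.add h0).congr' (Filter.EventuallyEq.symm hEvM)
  -- rpow versions
  have habs2 : ∀ x : ℝ, |x| ^ (2:ℝ) = x ^ 2 := by
    intro x
    rw [show (2:ℝ) = ((2:ℕ):ℝ) by norm_num, Real.rpow_natCast, sq_abs]
  have hLP : Tendsto (fun x : ℝ => (f x * x - 2 * F x) / |x| ^ (2:ℝ)) atTop (nhds (1/2)) := by
    refine hTP.congr fun x => ?_
    rw [habs2]
  have hLM : Tendsto (fun x : ℝ => (f x * x - 2 * F x) / |x| ^ (2:ℝ)) atBot (nhds (1/2)) := by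
    refine hTM.congr fun x => ?_
    rw [habs2]
  exact ⟨hTP, hTM, le_of_eq hLP.liminf_eq.symm, le_of_eq hLM.liminf_eq.symm, by norm_num⟩
end

section
/- Fix real constants C > 0 and q > 2, and let f : ℝ → ℝ be defined by f(x) = x − (C+1)|x|^{q−2}·x for |x| ≤ 1 and f(x) = x·log|x| − C·x for |x| > 1, with F(x) = ∫₀^x f(s) ds. Then for every real q' > 2 one has f(x)·x − q'·F(x) → −∞ as x → +∞. Consequently f fails the Ambrosetti–Rabinowitz condition: there exist no q' > 2 and M > 0 such that 0 < q'·F(x) ≤ f(x)·x for all x ≥ M. -/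
set_option maxHeartbeats 1000000


open Filter MeasureTheory

/-- For the model nonlinearity of the paper (`C > 0`, `q > 2`), for every `q' > 2`
one has `f(x)x - q' F(x) → -∞` as `x → +∞`; consequently the Ambrosetti–Rabinowitz
condition fails: there are no `q' > 2` and `M > 0` with `0 < q' F(x) ≤ f(x) x`
for all `x ≥ M`. -/
theorem stmt_2 (C q : ℝ) (hC : 0 < C) (hq : 2 < q)
    (f F : ℝ → ℝ)
    (hf1 : ∀ x : ℝ, |x| ≤ 1 → f x = x - (C + 1) * |x| ^ (q - 2) * x)
    (hf2 : ∀ x : ℝ, 1 < |x| → f x = x * Real.log |x| - C * x)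
    (hF : ∀ x : ℝ, F x = ∫ s in (0:ℝ)..x, f s) :
    (∀ q' : ℝ, 2 < q' →
      Tendsto (fun x : ℝ => f x * x - q' * F x) atTop atBot) ∧
    ¬ ∃ q' : ℝ, 2 < q' ∧ ∃ M : ℝ, 0 < M ∧
        ∀ x : ℝ, M ≤ x → 0 < q' * F x ∧ q' * F x ≤ f x * x := by
  -- f agrees with s log s - C s on [1, ∞)
  have hfs : ∀ s : ℝ, 1 ≤ s → f s = s * Real.log s - C * s := by
    intro s hs
    rcases eq_or_lt_of_le hs with h | h
    · rw [← h, hf1 1 (by norm_num)]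
      simp [Real.one_rpow]
    · rw [hf2 s (by rwa [abs_of_pos (by linarith)]), abs_of_pos (by linarith)]
  -- formula for F on [1, ∞)
  have key : ∀ x : ℝ, 1 ≤ x →
      F x = F 1 + (x ^ 2 / 2 * Real.log x - x ^ 2 / 4 - C * x ^ 2 / 2 + 1 / 4 + C / 2) := by
    intro x hx
    have heq : Set.EqOn f (fun s => s * Real.log s - C * s) (Set.uIcc 1 x) := by
      intro s hs
      rw [Set.uIcc_of_le hx] at hs
      exact hfs s hs.1
    have hcont : ContinuousOn (fun s : ℝ => s * Real.log s - C * s) (Set.uIcc 1 x) := by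
      apply ContinuousOn.sub
      · exact continuousOn_id.mul (Real.continuousOn_log.mono (by
          intro s hs; rw [Set.uIcc_of_le hx] at hs
          simp only [Set.mem_compl_iff, Set.mem_singleton_iff]
          intro h; rw [h] at hs; linarith [hs.1]))
      · exact continuousOn_const.mul continuousOn_id
    have hint1x : IntervalIntegrable f volume 1 x :=
      (hcont.congr heq).intervalIntegrable
    have hint01 : IntervalIntegrable f volume 0 1 := by
      apply ContinuousOn.intervalIntegrable
      have habs : Continuous fun s : ℝ => |s| ^ (q - 2) := by
        rw [continuous_iff_continuousAt]
        intro s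
        exact (Real.continuousAt_rpow_const |s| (q - 2)
          (Or.inr (by linarith))).comp continuous_abs.continuousAt
      have : ContinuousOn (fun s : ℝ => s - (C + 1) * |s| ^ (q - 2) * s)
          (Set.uIcc 0 1) :=
        (continuous_id.sub (((continuous_const.mul habs).mul continuous_id))).continuousOn
      apply this.congr
      intro s hs
      rw [Set.uIcc_of_le (by norm_num : (0:ℝ) ≤ 1)] at hs
      exact hf1 s (by rw [abs_of_nonneg hs.1]; exact hs.2)
    have hderiv : ∀ s ∈ Set.uIcc (1:ℝ) x,
        HasDerivAt (fun s => s ^ 2 / 2 * Real.log s - s ^ 2 / 4 - C * s ^ 2 / 2)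
          (s * Real.log s - C * s) s := by
      intro s hs
      rw [Set.uIcc_of_le hx] at hs
      have hs0 : s ≠ 0 := by intro h; rw [h] at hs; linarith [hs.1]
      have h1 : HasDerivAt (fun s : ℝ => s ^ 2 / 2 * Real.log s)
          (2 * s ^ 1 / 2 * Real.log s + s ^ 2 / 2 * s⁻¹) s :=
        ((hasDerivAt_pow 2 s).div_const 2).mul (Real.hasDerivAt_log hs0)
      have h2 : HasDerivAt (fun s : ℝ => s ^ 2 / 4) (2 * s ^ 1 / 4) s :=
        (hasDerivAt_pow 2 s).div_const 4
      have h3 : HasDerivAt (fun s : ℝ => C * s ^ 2 / 2) (C * (2 * s ^ 1) / 2) s :=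
        ((hasDerivAt_pow 2 s).const_mul C).div_const 2
      have := (h1.sub h2).sub h3
      refine this.congr_deriv ?_
      rw [show s ^ 2 / 2 * s⁻¹ = s / 2 by
        rw [div_mul_eq_mul_div, pow_two, mul_assoc, mul_inv_cancel₀ hs0, mul_one]]
      ring
    have hFTC : ∫ s in (1:ℝ)..x, f s =
        (x ^ 2 / 2 * Real.log x - x ^ 2 / 4 - C * x ^ 2 / 2) -
        (1 ^ 2 / 2 * Real.log 1 - 1 ^ 2 / 4 - C * 1 ^ 2 / 2) := by
      rw [intervalIntegral.integral_congr heq]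
      exact intervalIntegral.integral_eq_sub_of_hasDerivAt hderiv hcont.intervalIntegrable
    have hsplit := intervalIntegral.integral_add_adjacent_intervals hint01 hint1x
    rw [hF x, hF 1, ← hsplit, hFTC]
    simp [Real.log_one]
    ring
  have main : ∀ q' : ℝ, 2 < q' →
      Tendsto (fun x : ℝ => f x * x - q' * F x) atTop atBot := by
    intro q' hq'
    set b : ℝ := q' / 4 + C * q' / 2 - C with hb
    set c : ℝ := -(q' * (F 1 + 1 / 4 + C / 2)) with hc
    have hmodel : Tendsto (fun x : ℝ => x ^ 2 * ((1 - q' / 2) * Real.log x + b) + c)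
        atTop atBot := by
      apply tendsto_atBot_add_const_right
      apply Tendsto.atTop_mul_atBot₀ (tendsto_pow_atTop (by norm_num))
      apply tendsto_atBot_add_const_right
      have : Tendsto (fun x : ℝ => -((q' / 2 - 1) * Real.log x)) atTop atBot :=
        tendsto_neg_atTop_atBot.comp
          (Real.tendsto_log_atTop.const_mul_atTop (by linarith))
      refine this.congr (fun x => by ring)
    apply hmodel.congr'
    filter_upwards [eventually_ge_atTop (1:ℝ), eventually_gt_atTop (1:ℝ)] with x hx1 hx1'
    rw [hf2 x (by rwa [abs_of_pos (by linarith)]), abs_of_pos (by linarith), key x hx1]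
    ring
  refine ⟨main, ?_⟩
  rintro ⟨q', hq', M, hM, hAR⟩
  have := (main q' hq').eventually (eventually_lt_atBot (0:ℝ))
  rcases ((this.and (eventually_ge_atTop M)).exists) with ⟨x, hneg, hxM⟩
  have h := hAR x hxM
  linarith [h.1, h.2]
end
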